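/- The function T₂(x) := −2π·(x − π + sin x)/(π − x)³ satisfies T₂''(x) ≤ 0 for all x ∈ (0, π). -/

import Mathlib

open Real

lemma aux_A : ∀ s ∈ Set.Icc (0:ℝ) π, s * Real.cos s ≤ Real.sin s := by
  have hmono : MonotoneOn (fun s : ℝ => Real.sin s - s * Real.cos s) (Set.Icc 0 π) := by
    have hder : ∀ s : ℝ, HasDerivAt (fun s : ℝ => Real.sin s - s * Real.cos s)
        (s * Real.sin s) s := by
      intro s
      have h := (Real.hasDerivAt_sin s).sub
        ((hasDerivAt_id s).mul (Real.hasDerivAt_cos s))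
      refine h.congr_deriv ?_
      all_goals ((try simp only [id_eq]); ring)
    apply monotoneOn_of_deriv_nonneg (convex_Icc 0 π)
    · exact (Continuous.continuousOn (by continuity))
    · intro s hs
      exact (hder s).differentiableAt.differentiableWithinAt
    · intro s hs
      rw [interior_Icc] at hs
      rw [(hder s).deriv]
      exact mul_nonneg hs.1.le
        (Real.sin_nonneg_of_nonneg_of_le_pi hs.1.le hs.2.le)
  intro s hs
  have h0 : (0:ℝ) ∈ Set.Icc (0:ℝ) π := ⟨le_refl 0, Real.pi_pos.le⟩
  have := hmono h0 hs hs.1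
  simp at this
  linarith

lemma aux_B : ∀ s ∈ Set.Icc (0:ℝ) (π/2),
    s * Real.cos s ≤ (1 - s^2/3) * Real.sin s := by
  have hmono : MonotoneOn (fun s : ℝ => (1 - s^2/3) * Real.sin s - s * Real.cos s)
      (Set.Icc 0 (π/2)) := by
    have hder : ∀ s : ℝ, HasDerivAt (fun s : ℝ => (1 - s^2/3) * Real.sin s - s * Real.cos s)
        (s/3 * (Real.sin s - s * Real.cos s)) s := by
      intro s
      have h1 : HasDerivAt (fun s : ℝ => (1 - s^2/3)) (-(2*s)/3) s := by
        have := ((hasDerivAt_pow 2 s).div_const 3).const_sub 1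
        refine this.congr_deriv ?_
        ring
      have h := (h1.mul (Real.hasDerivAt_sin s)).sub
        ((hasDerivAt_id s).mul (Real.hasDerivAt_cos s))
      refine h.congr_deriv ?_
      all_goals ((try simp only [id_eq]); ring)
    apply monotoneOn_of_deriv_nonneg (convex_Icc 0 (π/2))
    · exact (Continuous.continuousOn (by continuity))
    · intro s hs
      exact (hder s).differentiableAt.differentiableWithinAt
    · intro s hs
      rw [interior_Icc] at hs
      rw [(hder s).deriv]
      have hA := aux_A s ⟨hs.1.le, by linarith [Real.pi_pos, hs.2]⟩
      have : (0:ℝ) ≤ s/3 := by linarith [hs.1]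
      exact mul_nonneg this (by linarith)
  intro s hs
  have h0 : (0:ℝ) ∈ Set.Icc (0:ℝ) (π/2) := ⟨le_refl 0, by linarith [Real.pi_pos]⟩
  have := hmono h0 hs hs.1
  simp at this
  linarith

lemma aux_key {x : ℝ} (hx : x ∈ Set.Ioo 0 π) :
    6*(π - x)*(1 - Real.cos x) ≤ (12 - (π - x)^2) * Real.sin x := by
  set s := (π - x)/2 with hs
  have hxs : x = π - 2*s := by rw [hs]; ring
  have hs0 : 0 < s := by rw [hs]; linarith [hx.2]
  have hs2 : s < π/2 := by rw [hs]; linarith [hx.1]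
  have hcos : 0 < Real.cos s := Real.cos_pos_of_mem_Ioo ⟨by linarith [Real.pi_pos], hs2⟩
  have hsin : 0 ≤ Real.sin s :=
    Real.sin_nonneg_of_nonneg_of_le_pi hs0.le (by linarith [Real.pi_pos])
  have hB : s * Real.cos s ≤ (1 - s^2/3) * Real.sin s := aux_B s ⟨hs0.le, hs2.le⟩
  have h1 : Real.sin x = 2 * Real.sin s * Real.cos s := by
    rw [hxs, Real.sin_pi_sub, Real.sin_two_mul]
  have h2 : Real.cos x = -(2 * Real.cos s ^ 2 - 1) := by
    rw [hxs, Real.cos_pi_sub, Real.cos_two_mul]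
  rw [h1, h2, hxs]
  nlinarith [mul_le_mul_of_nonneg_right hB hcos.le]

noncomputable def F1fun (x : ℝ) : ℝ :=
  -2*π*((1 + Real.cos x)*(π - x) + 3*(x - π + Real.sin x)) / (π - x)^4

lemma hasDerivAt_f {x : ℝ} (hx : x ≠ π) :
    HasDerivAt (fun x : ℝ => -2 * π * (x - π + Real.sin x) / (π - x) ^ 3) (F1fun x) x := by
  have hu : π - x ≠ 0 := sub_ne_zero.mpr (Ne.symm hx)
  have h1 : HasDerivAt (fun x : ℝ => -2 * π * (x - π + Real.sin x))
      (-2 * π * (1 + Real.cos x)) x := by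
    have := (((hasDerivAt_id x).sub_const π).add (Real.hasDerivAt_sin x)).const_mul (-2*π)
    refine this.congr_deriv ?_
    simp only [id_eq]
  have h2 : HasDerivAt (fun x : ℝ => (π - x) ^ 3) (3 * (π - x)^2 * (-1)) x := by
    have hb : HasDerivAt (fun x : ℝ => π - x) (-1 : ℝ) x := by
      simpa using ((hasDerivAt_id x).const_sub π)
    have := hb.pow 3
    refine this.congr_deriv ?_
    all_goals ((try simp only [id_eq]); ring)
  have h := h1.div h2 (pow_ne_zero 3 hu)
  refine h.congr_deriv ?_
  unfold F1fun
  field_simp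
  ring

theorem stmt_6 :
    ∀ x ∈ Set.Ioo (0 : ℝ) π,
      deriv (deriv (fun x : ℝ => -2 * π * (x - π + Real.sin x) / (π - x) ^ 3)) x ≤ 0 := by
  intro x hx
  have hu : 0 < π - x := by linarith [hx.2]
  have hu' : π - x ≠ 0 := ne_of_gt hu
  have hxne : x ≠ π := by intro h; rw [h] at hu; linarith
  -- deriv f = F1fun in a neighborhood
  have hev : deriv (fun x : ℝ => -2 * π * (x - π + Real.sin x) / (π - x) ^ 3) =ᶠ[nhds x] F1fun := by
    filter_upwards [isOpen_compl_singleton.mem_nhds (by simpa using hxne :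
        x ∈ ({π}ᶜ : Set ℝ))] with y hy
    exact (hasDerivAt_f hy).deriv
  rw [hev.deriv_eq]
  -- derivative of F1fun
  have hc : HasDerivAt (fun x : ℝ => -2*π*((1 + Real.cos x)*(π - x) + 3*(x - π + Real.sin x)))
      (-2*π*(-(π - x)*Real.sin x + 2 + 2*Real.cos x)) x := by
    have hb : HasDerivAt (fun x : ℝ => π - x) (-1 : ℝ) x := by
      simpa using ((hasDerivAt_id x).const_sub π)
    have h1 : HasDerivAt (fun x : ℝ => (1 + Real.cos x)) (-Real.sin x) x := by
      simpa using (Real.hasDerivAt_cos x).const_add 1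
    have h2 := (h1.mul hb).add
      ((((hasDerivAt_id x).sub_const π).add (Real.hasDerivAt_sin x)).const_mul 3)
    have := h2.const_mul (-2*π)
    refine this.congr_deriv ?_
    all_goals ((try simp only [id_eq]); ring)
  have hd : HasDerivAt (fun x : ℝ => (π - x)^4) (4 * (π - x)^3 * (-1)) x := by
    have hb : HasDerivAt (fun x : ℝ => π - x) (-1 : ℝ) x := by
      simpa using ((hasDerivAt_id x).const_sub π)
    have := hb.pow 4
    refine this.congr_deriv ?_
    all_goals ((try simp only [id_eq]); ring)
  have hF1 := hc.div hd (pow_ne_zero 4 hu')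
  have hder : deriv F1fun x =
      (-2*π*(-(π - x)*Real.sin x + 2 + 2*Real.cos x) * (π - x)^4
        - (-2*π*((1 + Real.cos x)*(π - x) + 3*(x - π + Real.sin x))) * (4*(π - x)^3*(-1)))
        / ((π - x)^4)^2 := by
    have : F1fun = fun x : ℝ =>
        (-2*π*((1 + Real.cos x)*(π - x) + 3*(x - π + Real.sin x))) / (π - x)^4 := by
      funext y; unfold F1fun; ring
    rw [this]
    exact hF1.deriv
  rw [hder]
  apply div_nonpos_of_nonpos_of_nonneg
  · have hkey := aux_key hx
    nlinarith [pow_pos hu 5, pow_pos hu 7, Real.pi_pos,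
      mul_nonneg (mul_nonneg (by positivity : (0:ℝ) ≤ 2*π) (pow_pos hu 7).le)
        (by linarith : (0:ℝ) ≤ (12 - (π - x)^2) * Real.sin x - 6*(π - x)*(1 - Real.cos x))]
  · positivity
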